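/- Let T be a hypercyclic bounded linear operator on a complex Banach space X and let x be a hypercyclic vector for T. Then Γ = {λx : λ ∈ ℂ, |λ| ≤ 1} is an uncountable scrambled set for T; in particular, T is Li-Yorke chaotic. -/

import Mathlib

open Filter Topology ENNReal

/-- `T` is Li-Yorke chaotic: it admits an uncountable scrambled set `Γ`, i.e. for all
distinct `u v ∈ Γ`, `liminf ‖Tⁿu − Tⁿv‖ = 0` and `limsup ‖Tⁿu − Tⁿv‖ > 0`
(limits computed in `ℝ≥0∞` so that they are always well defined). -/
def LiYorkeChaotic {𝕜 X : Type*} [NontriviallyNormedField 𝕜]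
    [NormedAddCommGroup X] [NormedSpace 𝕜 X] (T : X →L[𝕜] X) : Prop :=
  ∃ Γ : Set X, ¬Γ.Countable ∧
    ∀ u ∈ Γ, ∀ v ∈ Γ, u ≠ v →
      Filter.liminf (fun n : ℕ => (‖(T ^ n) u - (T ^ n) v‖₊ : ℝ≥0∞)) atTop = 0 ∧
      0 < Filter.limsup (fun n : ℕ => (‖(T ^ n) u - (T ^ n) v‖₊ : ℝ≥0∞)) atTop

/-- If `x` is a hypercyclic vector for a bounded operator `T` on a (nonzero) complex
Banach space, then `Γ = {λ • x : ‖λ‖ ≤ 1}` is an uncountable scrambled set for `T`;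
in particular `T` is Li-Yorke chaotic. -/
theorem scrambled_set_of_hypercyclic_vector {X : Type*}
    [NormedAddCommGroup X] [NormedSpace ℂ X] [CompleteSpace X] [Nontrivial X]
    (T : X →L[ℂ] X) (x : X) (hx : Dense (Set.range fun n : ℕ => (T ^ n) x)) :
    (¬((fun lam : ℂ => lam • x) '' {lam : ℂ | ‖lam‖ ≤ 1}).Countable ∧
      ∀ u ∈ (fun lam : ℂ => lam • x) '' {lam : ℂ | ‖lam‖ ≤ 1},
        ∀ v ∈ (fun lam : ℂ => lam • x) '' {lam : ℂ | ‖lam‖ ≤ 1}, u ≠ v →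
          Filter.liminf (fun n : ℕ => (‖(T ^ n) u - (T ^ n) v‖₊ : ℝ≥0∞)) atTop = 0 ∧
          0 < Filter.limsup (fun n : ℕ => (‖(T ^ n) u - (T ^ n) v‖₊ : ℝ≥0∞)) atTop) ∧
    LiYorkeChaotic T := by
  -- the hypercyclic vector is nonzero
  have hx0 : x ≠ 0 := by
    rintro rfl
    have h0 : (Set.range fun n : ℕ => (T ^ n) (0 : X)) = {0} := by
      ext y; simp [eq_comm]
    rw [h0] at hx
    obtain ⟨y, hy⟩ := exists_ne (0 : X)
    have : y ∈ closure ({0} : Set X) := hx.closure_eq ▸ Set.mem_univ y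
    rw [isClosed_singleton.closure_eq] at this
    exact hy this
  haveI : ∀ z : X, NeBot (𝓝[≠] z) := fun z => Module.punctured_nhds_neBot ℂ X z
  -- the orbit visits every open set infinitely often (for indices ≥ N)
  have hvisit : ∀ (U : Set X), IsOpen U → U.Nonempty → ∀ N : ℕ,
      ∃ n ≥ N, (T ^ n) x ∈ U := by
    intro U hU hUne N
    have hd : Dense ((Set.range fun n : ℕ => (T ^ n) x)
        \ ((fun n : ℕ => (T ^ n) x) '' Set.Iio N)) :=
      hx.diff_finite ((Set.finite_Iio N).image _)
    obtain ⟨y, ⟨⟨n, rfl⟩, hn2⟩, hyU⟩ := hd.exists_mem_open hU hUne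
    refine ⟨n, ?_, hyU⟩
    by_contra h
    exact hn2 ⟨n, Set.mem_Iio.mpr (by omega), rfl⟩
  -- frequently small
  have hsmall : ∀ ε : ℝ, 0 < ε → ∃ᶠ n in atTop, ‖(T ^ n) x‖ < ε := by
    intro ε hε
    rw [frequently_atTop]
    intro N
    obtain ⟨n, hn, hmem⟩ := hvisit (Metric.ball 0 ε) Metric.isOpen_ball
      ⟨0, by simpa using hε⟩ N
    exact ⟨n, hn, by simpa using hmem⟩
  -- frequently big
  have hbig : ∃ᶠ n in atTop, (1 : ℝ) ≤ ‖(T ^ n) x‖ := by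
    obtain ⟨y, hy⟩ := exists_ne (0 : X)
    set z : X := ((2 / ‖y‖ : ℝ) : ℂ) • y with hz_def
    have hyn : (0 : ℝ) < ‖y‖ := norm_pos_iff.mpr hy
    have hz : ‖z‖ = 2 := by
      rw [hz_def, norm_smul, Complex.norm_real, Real.norm_eq_abs,
        abs_of_pos (by positivity), div_mul_cancel₀]
      exact ne_of_gt hyn
    rw [frequently_atTop]
    intro N
    obtain ⟨n, hn, hmem⟩ := hvisit (Metric.ball z 1) Metric.isOpen_ball
      ⟨z, by simp⟩ N
    refine ⟨n, hn, ?_⟩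
    have h1 : ‖(T ^ n) x - z‖ < 1 := by
      simpa [dist_eq_norm] using hmem
    have h2 : ‖z‖ - ‖(T ^ n) x - z‖ ≤ ‖(T ^ n) x‖ := by
      have := norm_sub_norm_le z ((T ^ n) x)
      have h3 : ‖z - (T ^ n) x‖ = ‖(T ^ n) x - z‖ := norm_sub_rev _ _
      linarith
    linarith
  -- the scrambled-set property
  have main : ∀ u ∈ (fun lam : ℂ => lam • x) '' {lam : ℂ | ‖lam‖ ≤ 1},
      ∀ v ∈ (fun lam : ℂ => lam • x) '' {lam : ℂ | ‖lam‖ ≤ 1}, u ≠ v →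
        Filter.liminf (fun n : ℕ => (‖(T ^ n) u - (T ^ n) v‖₊ : ℝ≥0∞)) atTop = 0 ∧
        0 < Filter.limsup (fun n : ℕ => (‖(T ^ n) u - (T ^ n) v‖₊ : ℝ≥0∞)) atTop := by
    rintro u ⟨a, _, rfl⟩ v ⟨b, _, rfl⟩ huv
    have hab : a ≠ b := fun h => huv (by rw [h])
    set c : ℂ := a - b with hc_def
    have hc : c ≠ 0 := sub_ne_zero.mpr hab
    have hcn : (0 : ℝ) < ‖c‖ := norm_pos_iff.mpr hc
    have key : ∀ n : ℕ, (‖(T ^ n) (a • x) - (T ^ n) (b • x)‖₊ : ℝ≥0∞)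
        = (‖c‖₊ : ℝ≥0∞) * (‖(T ^ n) x‖₊ : ℝ≥0∞) := by
      intro n
      have : (T ^ n) (a • x) - (T ^ n) (b • x) = c • ((T ^ n) x) := by
        rw [map_smul, map_smul, hc_def, sub_smul]
      rw [this, nnnorm_smul, ENNReal.coe_mul]
    constructor
    · refine le_antisymm (ENNReal.le_of_forall_pos_le_add fun ε hε _ => ?_) (zero_le)
      rw [zero_add]
      refine liminf_le_of_frequently_le' ?_
      have hδ : (0 : ℝ) < (ε : ℝ) / ‖c‖ := by positivity
      refine (hsmall _ hδ).mono fun n hn => ?_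
      rw [key n, ← ENNReal.coe_mul, ENNReal.coe_le_coe, ← NNReal.coe_le_coe]
      push_cast
      rw [← FunLike.coe_pow_eq_iterate]
      calc ‖c‖ * ‖(T ^ n) x‖ ≤ ‖c‖ * ((ε : ℝ) / ‖c‖) := by
            exact mul_le_mul_of_nonneg_left hn.le (norm_nonneg c)
        _ = (ε : ℝ) := mul_div_cancel₀ _ (ne_of_gt hcn)
    · have hle : (‖c‖₊ : ℝ≥0∞) ≤ Filter.limsup
          (fun n : ℕ => (‖(T ^ n) (a • x) - (T ^ n) (b • x)‖₊ : ℝ≥0∞)) atTop := by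
        refine le_limsup_of_frequently_le' ?_
        refine hbig.mono fun n hn => ?_
        rw [key n]
        have : (1 : ℝ≥0∞) ≤ (‖(T ^ n) x‖₊ : ℝ≥0∞) := by
          rw [← ENNReal.coe_one, ENNReal.coe_le_coe, ← NNReal.coe_le_coe]
          simpa using hn
        calc (‖c‖₊ : ℝ≥0∞) = (‖c‖₊ : ℝ≥0∞) * 1 := (mul_one _).symm
          _ ≤ (‖c‖₊ : ℝ≥0∞) * (‖(T ^ n) x‖₊ : ℝ≥0∞) :=
            mul_le_mul_right this _
      refine lt_of_lt_of_le ?_ hle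
      simpa using hc
  -- uncountability
  have huncount : ¬((fun lam : ℂ => lam • x) '' {lam : ℂ | ‖lam‖ ≤ 1}).Countable := by
    intro hcount
    have hinj : Function.Injective (fun lam : ℂ => lam • x) := fun a b h =>
      smul_left_injective ℂ hx0 h
    have h1 : ({lam : ℂ | ‖lam‖ ≤ 1}).Countable :=
      (hcount.preimage hinj).mono (Set.subset_preimage_image _ _)
    have h2 : (Set.Icc (0 : ℝ) 1).Countable := by
      refine (h1.preimage Complex.ofReal_injective).mono ?_
      intro t ht
      simp only [Set.mem_preimage, Set.mem_setOf_eq, Complex.norm_real, Real.norm_eq_abs]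
      rw [abs_of_nonneg ht.1]
      exact ht.2
    have h3 := h2.le_aleph0
    rw [Cardinal.mk_Icc_real (by norm_num : (0:ℝ) < 1)] at h3
    exact absurd h3 (not_le.mpr Cardinal.aleph0_lt_continuum)
  exact ⟨⟨huncount, main⟩, ⟨_, huncount, main⟩⟩
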